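/- The group commutator induces a well-defined biadditive bracket gr_m(G) × gr_n(G) → gr_{m+n}(G), sending (aΓ_{m+1}, bΓ_{n+1}) to [a,b]Γ_{m+n+1}, and the direct sum gr(G) = ⊕_{n≥1} gr_n(G) equipped with this bracket is a graded Lie ring (the bracket is bilinear, alternating, and satisfies the Jacobi identity). -/

import Mathlib

open scoped commutatorElement

/-- `gr G n` is the paper's `gr_{n+1}(G) = Γ_{n+1}(G)/Γ_{n+2}(G)`, i.e. the quotient of
`(⊤ : Subgroup G).lowerCentralSeries n` by `(⊤ : Subgroup G).lowerCentralSeries (n+1)` (viewed inside it). -/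
abbrev grLCS (G : Type*) [Group G] (n : ℕ) :=
  ((⊤ : Subgroup G).lowerCentralSeries n) ⧸ (((⊤ : Subgroup G).lowerCentralSeries (n + 1)).subgroupOf ((⊤ : Subgroup G).lowerCentralSeries n))

/-- The class of an element `a ∈ Γ_{n+1}(G)` in `gr G n`. -/
def grLCSMk {G : Type*} [Group G] {n : ℕ} (a : G) (h : a ∈ (⊤ : Subgroup G).lowerCentralSeries n) :
    grLCS G n := QuotientGroup.mk ⟨a, h⟩

/-- Transport along an equality of degrees. -/
def grLCSCast {G : Type*} [Group G] {i j : ℕ} (h : i = j) : grLCS G i → grLCS G j :=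
  fun x => h ▸ x

section Aux

open Subgroup

variable {G : Type*} [Group G]

local notation "L" => Subgroup.lowerCentralSeries (⊤ : Subgroup G)

theorem three_subgroups {H₁ H₂ H₃ N : Subgroup G} [N.Normal]
    (h1 : ⁅⁅H₂, H₃⁆, H₁⁆ ≤ N) (h2 : ⁅⁅H₃, H₁⁆, H₂⁆ ≤ N) : ⁅⁅H₁, H₂⁆, H₃⁆ ≤ N := by
  let π := QuotientGroup.mk' N
  have key : ∀ {A B C : Subgroup G}, ⁅⁅A, B⁆, C⁆ ≤ N ↔ ⁅⁅A.map π, B.map π⁆, C.map π⁆ = ⊥ := by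
    intro A B C
    rw [← Subgroup.map_commutator, ← Subgroup.map_commutator, Subgroup.map_eq_bot_iff,
      QuotientGroup.ker_mk']
  exact key.mpr (commutator_commutator_eq_bot_of_rotate (key.mp h1) (key.mp h2))

theorem lcs_comm_le : ∀ (j i : ℕ), ⁅L i, L j⁆ ≤ L (i + j + 1) := by
  intro j
  induction j with
  | zero =>
    intro i
    rw [Subgroup.lowerCentralSeries_zero]
    exact le_of_eq (rfl : (⊤ : Subgroup G).lowerCentralSeries (i+1) = ⁅L i, ⊤⁆).symm
  | succ j ih =>
    intro i
    have hdef : L (j+1) = ⁅L j, ⊤⁆ := rfl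
    rw [hdef]
    rw [Subgroup.commutator_comm]
    apply three_subgroups (N := L (i + (j+1) + 1))
    · calc ⁅⁅(⊤ : Subgroup G), L i⁆, L j⁆ = ⁅⁅L i, ⊤⁆, L j⁆ := by rw [Subgroup.commutator_comm (L i)]
        _ = ⁅L (i+1), L j⁆ := rfl
        _ ≤ L (i + 1 + j + 1) := ih (i+1)
        _ = L (i + (j+1) + 1) := by ring_nf
    · calc ⁅⁅L i, L j⁆, ⊤⁆ ≤ ⁅L (i + j + 1), ⊤⁆ := Subgroup.commutator_mono (ih i) le_rfl
        _ = L (i + j + 1 + 1) := rfl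
        _ = L (i + (j+1) + 1) := by ring_nf

theorem lcs_comm_mem {i j : ℕ} {a b : G} (ha : a ∈ L i) (hb : b ∈ L j) :
    ⁅a, b⁆ ∈ L (i + j + 1) :=
  lcs_comm_le j i (Subgroup.commutator_mem_commutator ha hb)

theorem lcs_comm_mem' {K : ℕ} {a b : G} {i j : ℕ} (ha : a ∈ L i) (hb : b ∈ L j)
    (h : K ≤ i + j + 1) : ⁅a, b⁆ ∈ L K :=
  Subgroup.lowerCentralSeries_antitone (S := ⊤) h (lcs_comm_mem ha hb)

variable (K : ℕ)

theorem pi_commute {k : ℕ} (h : K ≤ k + 1) {x : G} (hx : x ∈ L k) (g : G) :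
    ((g * x : G) : G ⧸ L K) = ((x * g : G) : G ⧸ L K) := by
  rw [QuotientGroup.eq]
  have : (g * x)⁻¹ * (x * g) = ⁅x⁻¹, g⁻¹⁆ := by group
  rw [this]
  exact lcs_comm_mem' (inv_mem hx) (show g⁻¹ ∈ L 0 from mem_top _) (by omega)

theorem pi_kill {k : ℕ} (h : K ≤ k) {x : G} (hx : x ∈ L k) :
    ((x : G) : G ⧸ L K) = 1 :=
  (QuotientGroup.eq_one_iff x).mpr (Subgroup.lowerCentralSeries_antitone (S := ⊤) h hx)

/-- absorb: `π ⁅u, v * w⁆ = π ⁅u, v⁆` when `⁅u, w⁆` dies mod `L K`. -/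
theorem pi_absorb_right {r s : ℕ} {u w : G} (hu : u ∈ L r) (hw : w ∈ L s)
    (hK : K ≤ r + s + 1) (v : G) :
    ((⁅u, v * w⁆ : G) : G ⧸ L K) = ((⁅u, v⁆ : G) : G ⧸ L K) := by
  have h1 : ⁅u, w⁆ ∈ L K := lcs_comm_mem' hu hw hK
  have h2 : v * ⁅u, w⁆ * v⁻¹ ∈ L K := (inferInstance : ((⊤ : Subgroup G).lowerCentralSeries K).Normal).conj_mem _ h1 v
  have e : ⁅u, v * w⁆ = ⁅u, v⁆ * (v * ⁅u, w⁆ * v⁻¹) := by group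
  rw [e, QuotientGroup.mk_mul, (QuotientGroup.eq_one_iff _).mpr h2, mul_one]

theorem pi_absorb_left {r s : ℕ} {u w : G} (hu : u ∈ L r) (hw : w ∈ L s)
    (hK : K ≤ r + s + 1) (v : G) :
    ((⁅v * w, u⁆ : G) : G ⧸ L K) = ((⁅v, u⁆ : G) : G ⧸ L K) := by
  have h1 : ⁅w, u⁆ ∈ L K := lcs_comm_mem' hw hu (by omega)
  have h2 : v * ⁅w, u⁆ * v⁻¹ ∈ L K := (inferInstance : ((⊤ : Subgroup G).lowerCentralSeries K).Normal).conj_mem _ h1 v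
  have e : ⁅v * w, u⁆ = (v * ⁅w, u⁆ * v⁻¹) * ⁅v, u⁆ := by group
  rw [e, QuotientGroup.mk_mul, (QuotientGroup.eq_one_iff _).mpr h2, one_mul]

variable {K}

theorem grLCSMk_eq_iff {k : ℕ} {x y : G} (hx : x ∈ L k) (hy : y ∈ L k) :
    grLCSMk x hx = grLCSMk y hy ↔ ((x : G ⧸ L (k+1))) = ((y : G ⧸ L (k+1))) := by
  rw [grLCSMk, grLCSMk, QuotientGroup.eq, Subgroup.mem_subgroupOf, QuotientGroup.eq]
  rfl

theorem grLCSMk_mul {k : ℕ} {x y : G} (hx : x ∈ L k) (hy : y ∈ L k) :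
    grLCSMk x hx * grLCSMk y hy = grLCSMk (x * y) (mul_mem hx hy) := rfl

theorem grLCSCast_mk {i j : ℕ} (h : i = j) (a : G) (ha : a ∈ L i) :
    grLCSCast h (grLCSMk a ha) = grLCSMk a (h ▸ ha) := by subst h; rfl

/-- The bracket on graded pieces. -/
def grB (m n : ℕ) (x : grLCS G m) (y : grLCS G n) : grLCS G (m + n + 1) :=
  Quotient.liftOn₂ x y
    (fun a b => grLCSMk ⁅(a : G), (b : G)⁆ (lcs_comm_mem a.2 b.2))
    (by
      rintro ⟨a, ha⟩ ⟨b, hb⟩ ⟨a', ha'⟩ ⟨b', hb'⟩ hra hrb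
      replace hra := Subgroup.mem_subgroupOf.mp (QuotientGroup.leftRel_apply.mp hra)
      replace hrb := Subgroup.mem_subgroupOf.mp (QuotientGroup.leftRel_apply.mp hrb)
      simp only
      rw [grLCSMk_eq_iff]
      have ea : a' = a * (a⁻¹ * a') := by group
      have eb : b' = b * (b⁻¹ * b') := by group
      calc ((⁅a, b⁆ : G) : G ⧸ L (m+n+1+1))
          = ((⁅a, b * (b⁻¹ * b')⁆ : G) : G ⧸ L (m+n+1+1)) :=
            (pi_absorb_right _ ha hrb (by omega) b).symm
        _ = ((⁅a, b'⁆ : G) : G ⧸ L (m+n+1+1)) := by rw [← eb]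
        _ = ((⁅a * (a⁻¹ * a'), b'⁆ : G) : G ⧸ L (m+n+1+1)) :=
            (pi_absorb_left _ hb' hra (by omega) a).symm
        _ = ((⁅a', b'⁆ : G) : G ⧸ L (m+n+1+1)) := by rw [← ea])

theorem grB_mk {m n : ℕ} {a b : G} (ha : a ∈ L m) (hb : b ∈ L n) :
    grB m n (grLCSMk a ha) (grLCSMk b hb) = grLCSMk ⁅a, b⁆ (lcs_comm_mem ha hb) := rfl

end Aux

/-- The group commutator induces a well-defined biadditive bracket
`gr_m(G) × gr_n(G) → gr_{m+n}(G)` sending `(aΓ_{m+1}, bΓ_{n+1})` to `[a,b]Γ_{m+n+1}`, and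
the direct sum `gr(G) = ⊕_{n ≥ 1} gr_n(G)` with this bracket is a graded Lie ring: the
bracket is bilinear (written multiplicatively here), alternating, and satisfies the Jacobi
identity.  With Lean's indexing, the paper's `gr_{m+1} × gr_{n+1} → gr_{m+n+2}` is
`grLCS G m → grLCS G n → grLCS G (m+n+1)`. -/
theorem gr_graded_lie_ring (G : Type*) [Group G] :
    ∃ B : ∀ m n : ℕ, grLCS G m → grLCS G n → grLCS G (m + n + 1),
      (∀ (m n : ℕ) (a b : G) (ha : a ∈ (⊤ : Subgroup G).lowerCentralSeries m)
          (hb : b ∈ (⊤ : Subgroup G).lowerCentralSeries n) (hab : ⁅a, b⁆ ∈ (⊤ : Subgroup G).lowerCentralSeries (m + n + 1)),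
          B m n (grLCSMk a ha) (grLCSMk b hb) = grLCSMk ⁅a, b⁆ hab) ∧
      (∀ (m n : ℕ) (x x' : grLCS G m) (y : grLCS G n),
          B m n (x * x') y = B m n x y * B m n x' y) ∧
      (∀ (m n : ℕ) (x : grLCS G m) (y y' : grLCS G n),
          B m n x (y * y') = B m n x y * B m n x y') ∧
      (∀ (n : ℕ) (x : grLCS G n), B n n x x = 1) ∧
      (∀ (m n p : ℕ) (x : grLCS G m) (y : grLCS G n) (z : grLCS G p),
          B (m + n + 1) p (B m n x y) z *
            grLCSCast (by omega) (B (n + p + 1) m (B n p y z) x) *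
            grLCSCast (by omega) (B (p + m + 1) n (B p m z x) y) = 1) := by
  refine ⟨grB, fun m n a b ha hb hab => rfl, ?_, ?_, ?_, ?_⟩
  · -- left additivity
    intro m n x x' y
    induction x using QuotientGroup.induction_on with | H z =>
    induction x' using QuotientGroup.induction_on with | H z' =>
    induction y using QuotientGroup.induction_on with | H w =>
    obtain ⟨a, ha⟩ := z; obtain ⟨a', ha'⟩ := z'; obtain ⟨b, hb⟩ := w
    show grB m n (grLCSMk a ha * grLCSMk a' ha') (grLCSMk b hb) =
      grB m n (grLCSMk a ha) (grLCSMk b hb) * grB m n (grLCSMk a' ha') (grLCSMk b hb)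
    rw [grLCSMk_mul, grB_mk, grB_mk, grB_mk, grLCSMk_mul, grLCSMk_eq_iff]
    have e1 : ⁅a * a', b⁆ = ⁅a, ⁅a', b⁆⁆ * (⁅a', b⁆ * ⁅a, b⁆) := by group
    have hk : ⁅a, ⁅a', b⁆⁆ ∈ (⊤ : Subgroup G).lowerCentralSeries (m + n + 1 + 1) :=
      lcs_comm_mem' ha (lcs_comm_mem ha' hb) (by omega)
    rw [e1, QuotientGroup.mk_mul, pi_kill _ le_rfl hk, one_mul,
      pi_commute _ (le_refl (m+n+1+1)) (lcs_comm_mem ha hb) ⁅a', b⁆]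
  · -- right additivity
    intro m n x y y'
    induction x using QuotientGroup.induction_on with | H z =>
    induction y using QuotientGroup.induction_on with | H w =>
    induction y' using QuotientGroup.induction_on with | H w' =>
    obtain ⟨a, ha⟩ := z; obtain ⟨b, hb⟩ := w; obtain ⟨b', hb'⟩ := w'
    show grB m n (grLCSMk a ha) (grLCSMk b hb * grLCSMk b' hb') =
      grB m n (grLCSMk a ha) (grLCSMk b hb) * grB m n (grLCSMk a ha) (grLCSMk b' hb')
    rw [grLCSMk_mul, grB_mk, grB_mk, grB_mk, grLCSMk_mul, grLCSMk_eq_iff]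
    have e1 : ⁅a, b * b'⁆ = ⁅a, b⁆ * (⁅b, ⁅a, b'⁆⁆ * ⁅a, b'⁆) := by group
    have hk : ⁅b, ⁅a, b'⁆⁆ ∈ (⊤ : Subgroup G).lowerCentralSeries (m + n + 1 + 1) :=
      lcs_comm_mem' hb (lcs_comm_mem ha hb') (by omega)
    rw [e1, QuotientGroup.mk_mul, QuotientGroup.mk_mul, pi_kill _ le_rfl hk, one_mul,
      QuotientGroup.mk_mul]
  · -- alternating
    intro n x
    induction x using QuotientGroup.induction_on with | H z =>
    obtain ⟨a, ha⟩ := z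
    show grB n n (grLCSMk a ha) (grLCSMk a ha) = 1
    rw [grB_mk]
    apply (QuotientGroup.eq_one_iff _).mpr
    rw [Subgroup.mem_subgroupOf]
    show ⁅a, a⁆ ∈ (⊤ : Subgroup G).lowerCentralSeries (n + n + 1 + 1)
    rw [commutatorElement_self]; exact one_mem _
  · -- Jacobi
    intro m n p x y z
    induction x using QuotientGroup.induction_on with | H u =>
    induction y using QuotientGroup.induction_on with | H v =>
    induction z using QuotientGroup.induction_on with | H w =>
    obtain ⟨a, ha⟩ := u; obtain ⟨b, hb⟩ := v; obtain ⟨c, hc⟩ := w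
    rw [show (QuotientGroup.mk ⟨a, ha⟩ : grLCS G m) = grLCSMk a ha from rfl,
      show (QuotientGroup.mk ⟨b, hb⟩ : grLCS G n) = grLCSMk b hb from rfl,
      show (QuotientGroup.mk ⟨c, hc⟩ : grLCS G p) = grLCSMk c hc from rfl,
      grB_mk, grB_mk, grB_mk, grB_mk, grB_mk, grB_mk, grLCSCast_mk, grLCSCast_mk,
      grLCSMk_mul, grLCSMk_mul]
    apply (QuotientGroup.eq_one_iff _).mpr
    rw [Subgroup.mem_subgroupOf]
    show ⁅⁅a, b⁆, c⁆ * ⁅⁅b, c⁆, a⁆ * ⁅⁅c, a⁆, b⁆ ∈ (⊤ : Subgroup G).lowerCentralSeries (m + n + 1 + p + 1 + 1)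
    rw [← QuotientGroup.eq_one_iff]
    set K := m + n + 1 + p + 1 + 1 with hK
    have hab : ⁅a, b⁆ ∈ (⊤ : Subgroup G).lowerCentralSeries (m + n + 1) := lcs_comm_mem ha hb
    have hbc : ⁅b, c⁆ ∈ (⊤ : Subgroup G).lowerCentralSeries (n + p + 1) := lcs_comm_mem hb hc
    have hca : ⁅c, a⁆ ∈ (⊤ : Subgroup G).lowerCentralSeries (p + m + 1) := lcs_comm_mem hc ha
    have e1 : ((⁅⁅a, b⁆, c⁆ : G) : G ⧸ (⊤ : Subgroup G).lowerCentralSeries K)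
        = ((⁅⁅a, b⁆, b * c * b⁻¹⁆ : G) : G ⧸ (⊤ : Subgroup G).lowerCentralSeries K) := by
      have e : b * c * b⁻¹ = c * ⁅c⁻¹, b⁆ := by group
      rw [e]
      exact (pi_absorb_right K hab (lcs_comm_mem (inv_mem hc) hb) (by omega) c).symm
    have e2 : ((⁅⁅b, c⁆, a⁆ : G) : G ⧸ (⊤ : Subgroup G).lowerCentralSeries K)
        = ((⁅⁅b, c⁆, c * a * c⁻¹⁆ : G) : G ⧸ (⊤ : Subgroup G).lowerCentralSeries K) := by
      have e : c * a * c⁻¹ = a * ⁅a⁻¹, c⁆ := by group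
      rw [e]
      exact (pi_absorb_right K hbc (lcs_comm_mem (inv_mem ha) hc) (by omega) a).symm
    have e3 : ((⁅⁅c, a⁆, b⁆ : G) : G ⧸ (⊤ : Subgroup G).lowerCentralSeries K)
        = ((⁅⁅c, a⁆, a * b * a⁻¹⁆ : G) : G ⧸ (⊤ : Subgroup G).lowerCentralSeries K) := by
      have e : a * b * a⁻¹ = b * ⁅b⁻¹, a⁆ := by group
      rw [e]
      exact (pi_absorb_right K hca (lcs_comm_mem (inv_mem hb) ha) (by omega) b).symm
    have hw : ⁅⁅a, b⁆, b * c * b⁻¹⁆ * ⁅⁅b, c⁆, c * a * c⁻¹⁆ * ⁅⁅c, a⁆, a * b * a⁻¹⁆ = 1 := by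
      group
    rw [QuotientGroup.mk_mul, QuotientGroup.mk_mul, e1, e2, e3,
      ← QuotientGroup.mk_mul, ← QuotientGroup.mk_mul, hw, QuotientGroup.mk_one]
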